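/- Let 1 ≤ q < p < ∞ and define r by 1/r = 1/q − 1/p. For every bounded linear operator A : ℓ^p → ℓ^q whose matrix entries a_{j,k} := (A e_k)_j are all nonnegative reals, one has ( ∑_j ∑_k a_{j,k}^r )^{1/r} ≤ ‖A‖. (In particular this holds regardless of whether r ≥ 2 or r ≤ 2, so the Hardy–Littlewood entrywise ℓ^r inequality holds for positive operators with constant M = 1 for all r.) -/

import Mathlib

private lemma add_rpow_le_rpow_add_of_le_one {x y e : ℝ} (hx : 0 ≤ x) (hy : 0 ≤ y)
    (he : 0 ≤ e) (he1 : e ≤ 1) : (x + y) ^ e ≤ x ^ e + y ^ e := by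
  have h := NNReal.rpow_add_le_add_rpow x.toNNReal y.toNNReal he he1
  have h2 := NNReal.coe_le_coe.2 h
  simpa [← Real.toNNReal_add hx hy, NNReal.coe_rpow, Real.coe_toNNReal x hx,
    Real.coe_toNNReal y hy, Real.coe_toNNReal _ (add_nonneg hx hy)] using h2

private lemma sum_rpow_superadd {ι : Type*} {e : ℝ} (he : 0 < e) (he1 : e ≤ 1)
    (s : Finset ι) (f : ι → ℝ) (hf : ∀ i ∈ s, 0 ≤ f i) :
    (∑ i ∈ s, f i) ^ e ≤ ∑ i ∈ s, f i ^ e := by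
  induction s using Finset.cons_induction with
  | empty => simp [Real.zero_rpow he.ne']
  | cons a s ha ih =>
    rw [Finset.sum_cons, Finset.sum_cons]
    have h1 : 0 ≤ f a := hf a (Finset.mem_cons_self a s)
    have hf' : ∀ i ∈ s, 0 ≤ f i := fun i hi => hf i (Finset.mem_cons_of_mem hi)
    have h2 : 0 ≤ ∑ i ∈ s, f i := Finset.sum_nonneg hf'
    calc (f a + ∑ i ∈ s, f i) ^ e ≤ f a ^ e + (∑ i ∈ s, f i) ^ e :=
          add_rpow_le_rpow_add_of_le_one h1 h2 he.le he1
      _ ≤ f a ^ e + ∑ i ∈ s, f i ^ e := add_le_add (le_refl _) (ih hf')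

/-- **Hardy–Littlewood entrywise `ℓ^r` inequality for positive operators, with constant 1.**
For `1 ≤ q < p < ∞` and `1/r = 1/q - 1/p`, every bounded operator `A : ℓ^p → ℓ^q` whose
matrix entries `(A e_k) j = a j k` are nonnegative reals satisfies
`(∑_j ∑_k (a j k)^r)^(1/r) ≤ ‖A‖` (regardless of whether `r ≥ 2` or `r ≤ 2`). -/
theorem hardy_littlewood_entrywise_positive (p q r : ℝ) (hq1 : 1 ≤ q) (hqp : q < p)
    [Fact (1 ≤ ENNReal.ofReal p)] [Fact (1 ≤ ENNReal.ofReal q)]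
    (hrdef : 1 / r = 1 / q - 1 / p)
    (A : lp (fun _ : ℕ => ℂ) (ENNReal.ofReal p) →L[ℂ] lp (fun _ : ℕ => ℂ) (ENNReal.ofReal q))
    (a : ℕ → ℕ → ℝ) (ha : ∀ j k, 0 ≤ a j k)
    (hAa : ∀ j k : ℕ, A (lp.single (ENNReal.ofReal p) k 1) j = (a j k : ℂ)) :
    (∑' j : ℕ, ∑' k : ℕ, a j k ^ r) ^ (1 / r) ≤ ‖A‖ := by
  classical
  set P := ENNReal.ofReal p with hP
  set Q := ENNReal.ofReal q with hQ
  have hq0 : 0 < q := lt_of_lt_of_le one_pos hq1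
  have hp0 : 0 < p := hq0.trans hqp
  have h1r : 0 < 1 / r := by
    rw [hrdef, sub_pos]
    exact one_div_lt_one_div_of_lt hq0 hqp
  have hr0 : 0 < r := one_div_pos.mp h1r
  have hPt : P.toReal = p := ENNReal.toReal_ofReal hp0.le
  have hQt : Q.toReal = q := ENNReal.toReal_ofReal hq0.le
  have haR : ∀ j k, 0 ≤ a j k ^ r := fun j k => Real.rpow_nonneg (ha j k) r
  have hrq : r / q = 1 + r / p := by
    have h1 : r * (1 / r) = r * (1 / q - 1 / p) := by rw [hrdef]
    rw [mul_one_div_cancel hr0.ne', mul_sub, mul_one_div, mul_one_div] at h1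
    linarith
  have hexp : q / p + q / r = 1 := by
    have h2 : q * (1 / r) = q * (1 / q - 1 / p) := by rw [hrdef]
    rw [mul_one_div, mul_sub, mul_one_div, mul_one_div, div_self hq0.ne'] at h2
    linarith
  -- The key finite-rectangle estimate.
  have key : ∀ F : Finset (ℕ × ℕ), (∑ jk ∈ F, a jk.1 jk.2 ^ r) ≤ ‖A‖ ^ r := by
    intro F
    set J := F.image Prod.fst with hJ
    set K := F.image Prod.snd with hK
    set S := ∑ j ∈ J, ∑ k ∈ K, a j k ^ r with hSdef
    have hFS : (∑ jk ∈ F, a jk.1 jk.2 ^ r) ≤ S := by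
      rw [hSdef, ← Finset.sum_product']
      apply Finset.sum_le_sum_of_subset_of_nonneg
      · intro jk hjk
        exact Finset.mem_product.2
          ⟨Finset.mem_image_of_mem _ hjk, Finset.mem_image_of_mem _ hjk⟩
      · intro jk _ _
        exact haR jk.1 jk.2
    have hS0 : 0 ≤ S := Finset.sum_nonneg fun j _ => Finset.sum_nonneg fun k _ => haR j k
    rcases eq_or_lt_of_le hS0 with hS | hSpos
    · refine hFS.trans ?_
      rw [← hS]
      exact Real.rpow_nonneg (norm_nonneg A) r
    -- Now `0 < S`.  Construct the test vector.
    set c : ℕ → ℝ := fun k => ∑ j ∈ J, a j k ^ r with hcdef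
    have hc0 : ∀ k, 0 ≤ c k := fun k => Finset.sum_nonneg fun j _ => haR j k
    have hcS : ∑ k ∈ K, c k = S := (Finset.sum_comm)
    set t : ℕ → ℝ := fun k => (c k / S) ^ (1 / p) with htdef
    have ht0 : ∀ k, 0 ≤ t k := fun k => Real.rpow_nonneg (div_nonneg (hc0 k) hS0) _
    set x : lp (fun _ : ℕ => ℂ) P := ∑ k ∈ K, lp.single P k ((t k : ℂ)) with hxdef
    have hPt0 : 0 < P.toReal := by rw [hPt]; exact hp0
    have hQt0 : 0 < Q.toReal := by rw [hQt]; exact hq0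
    -- `‖x‖ = 1`.
    have hxnorm : ‖x‖ = 1 := by
      have h1 : ‖x‖ ^ P.toReal = ∑ k ∈ K, ‖((t k : ℂ))‖ ^ P.toReal :=
        lp.norm_sum_single hPt0 (fun k => ((t k : ℂ))) K
      have h2 : ∀ k ∈ K, ‖((t k : ℂ))‖ ^ P.toReal = c k / S := by
        intro k _
        rw [hPt, Complex.norm_real, Real.norm_eq_abs, abs_of_nonneg (ht0 k)]
        show ((c k / S) ^ (1 / p)) ^ p = c k / S
        rw [← Real.rpow_mul (div_nonneg (hc0 k) hS0), one_div_mul_cancel hp0.ne',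
          Real.rpow_one]
      have h3 : ‖x‖ ^ P.toReal = 1 := by
        rw [h1, Finset.sum_congr rfl h2, ← Finset.sum_div, hcS, div_self hSpos.ne']
      have h4 := congrArg (fun y : ℝ => y ^ (1 / P.toReal)) h3
      simpa [← Real.rpow_mul (norm_nonneg x), mul_inv_cancel₀ hPt0.ne',
        mul_one_div_cancel hPt0.ne', Real.one_rpow] using h4
    -- The coordinates of `A x`.
    have hxsum : x = ∑ k ∈ K, (t k : ℂ) • lp.single P k 1 := by
      rw [hxdef]
      refine Finset.sum_congr rfl fun k _ => ?_
      rw [← lp.single_smul, smul_eq_mul, mul_one]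
    have hAx : ∀ j, (A x) j = ((∑ k ∈ K, t k * a j k : ℝ) : ℂ) := by
      intro j
      have h1 : A x = ∑ k ∈ K, (t k : ℂ) • A (lp.single P k 1) := by
        rw [hxsum, map_sum]
        exact Finset.sum_congr rfl fun k _ => by rw [map_smul]
      rw [h1, lp.coeFn_sum, Finset.sum_apply]
      push_cast
      refine Finset.sum_congr rfl fun k _ => ?_
      rw [lp.coeFn_smul, Pi.smul_apply, hAa j k, smul_eq_mul]
    set w : ℕ → ℝ := fun j => ∑ k ∈ K, t k * a j k with hwdef
    have hw0 : ∀ j, 0 ≤ w j := fun j =>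
      Finset.sum_nonneg fun k _ => mul_nonneg (ht0 k) (ha j k)
    -- The `ℓ^q` norm bound on the rows.
    have hsumw : ∑ j ∈ J, w j ^ q ≤ ‖A‖ ^ q := by
      have h1 := lp.sum_rpow_le_norm_rpow hQt0 (A x) J
      rw [hQt] at h1
      have h2 : ∀ j ∈ J, ‖(A x) j‖ ^ q = w j ^ q := by
        intro j _
        rw [hAx j, Complex.norm_real, Real.norm_eq_abs, abs_of_nonneg (hw0 j)]
      rw [Finset.sum_congr rfl h2] at h1
      refine h1.trans ?_
      have h3 : ‖A x‖ ≤ ‖A‖ := by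
        simpa [hxnorm] using A.le_opNorm x
      exact Real.rpow_le_rpow (norm_nonneg _) h3 hq0.le
    -- The per-row estimate.
    have hkey_j : ∀ j ∈ J, (∑ k ∈ K, a j k ^ r) ≤ S ^ (q / p) * w j ^ q := by
      intro j hj
      have hrownn : 0 ≤ ∑ k ∈ K, a j k ^ r := Finset.sum_nonneg fun k _ => haR j k
      have step1 : (∑ k ∈ K, a j k ^ r) ^ (1 / q) ≤ S ^ (1 / p) * w j := by
        calc (∑ k ∈ K, a j k ^ r) ^ (1 / q)
            ≤ ∑ k ∈ K, (a j k ^ r) ^ (1 / q) :=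
              sum_rpow_superadd (by positivity) ((div_le_one hq0).2 hq1) K _
                (fun k _ => haR j k)
          _ ≤ ∑ k ∈ K, a j k * c k ^ (1 / p) := by
              refine Finset.sum_le_sum fun k _ => ?_
              have e1 : (a j k ^ r) ^ (1 / q) = a j k ^ (r / q) := by
                rw [← Real.rpow_mul (ha j k), mul_one_div]
              rw [e1, hrq]
              rcases eq_or_lt_of_le (ha j k) with hk0 | hk0
              · rw [← hk0]
                rw [Real.zero_rpow (by positivity), zero_mul]
              · rw [Real.rpow_add hk0, Real.rpow_one]
                refine mul_le_mul_of_nonneg_left ?_ (ha j k)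
                have e2 : a j k ^ (r / p) = (a j k ^ r) ^ (1 / p) := by
                  rw [← Real.rpow_mul (ha j k), mul_one_div]
                rw [e2]
                refine Real.rpow_le_rpow (haR j k) ?_ (by positivity)
                exact Finset.single_le_sum (fun i _ => haR i k) hj
          _ = ∑ k ∈ K, a j k * (S ^ (1 / p) * t k) := by
              refine Finset.sum_congr rfl fun k _ => ?_
              congr 1
              rw [htdef]
              rw [← Real.mul_rpow hS0 (div_nonneg (hc0 k) hS0), mul_comm S,
                div_mul_cancel₀ _ hSpos.ne']
          _ = S ^ (1 / p) * w j := by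
              rw [hwdef, Finset.mul_sum]
              exact Finset.sum_congr rfl fun k _ => by ring
      have h2 : ((∑ k ∈ K, a j k ^ r) ^ (1 / q)) ^ q ≤ (S ^ (1 / p) * w j) ^ q :=
        Real.rpow_le_rpow (Real.rpow_nonneg hrownn _) step1 hq0.le
      rw [← Real.rpow_mul hrownn, one_div_mul_cancel hq0.ne', Real.rpow_one] at h2
      rw [Real.mul_rpow (Real.rpow_nonneg hS0 _) (hw0 j),
        ← Real.rpow_mul hS0] at h2
      calc (∑ k ∈ K, a j k ^ r) ≤ S ^ (1 / p * q) * w j ^ q := h2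
        _ = S ^ (q / p) * w j ^ q := by
            have he : 1 / p * q = q / p := by ring
            rw [he]
    -- Combine over rows.
    have hSle : S ≤ S ^ (q / p) * ‖A‖ ^ q := by
      calc S = ∑ j ∈ J, ∑ k ∈ K, a j k ^ r := hSdef
        _ ≤ ∑ j ∈ J, S ^ (q / p) * w j ^ q := Finset.sum_le_sum hkey_j
        _ = S ^ (q / p) * ∑ j ∈ J, w j ^ q := (Finset.mul_sum _ _ _).symm
        _ ≤ S ^ (q / p) * ‖A‖ ^ q :=
            mul_le_mul_of_nonneg_left hsumw (Real.rpow_nonneg hS0 _)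
    have hSr : S ^ (q / r) ≤ ‖A‖ ^ q := by
      have hsplit : S ^ (q / p) * S ^ (q / r) = S := by
        rw [← Real.rpow_add hSpos, hexp, Real.rpow_one]
      have h5 : S ^ (q / p) * S ^ (q / r) ≤ S ^ (q / p) * ‖A‖ ^ q :=
        hsplit.le.trans hSle
      exact le_of_mul_le_mul_left h5 (Real.rpow_pos_of_pos hSpos _)
    have hfin : S ≤ ‖A‖ ^ r := by
      have h3 := Real.rpow_le_rpow (Real.rpow_nonneg hS0 _) hSr
        (le_of_lt (div_pos hr0 hq0))
      rw [← Real.rpow_mul hS0, ← Real.rpow_mul (norm_nonneg A)] at h3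
      have e1 : q / r * (r / q) = 1 := by field_simp
      have e2 : q * (r / q) = r := by field_simp
      rwa [e1, e2, Real.rpow_one] at h3
    exact hFS.trans hfin
  -- Pass to the infinite sum.
  have hsum : Summable (fun jk : ℕ × ℕ => a jk.1 jk.2 ^ r) :=
    summable_of_sum_le (fun jk => haR jk.1 jk.2) key
  have hT : ∑' jk : ℕ × ℕ, a jk.1 jk.2 ^ r ≤ ‖A‖ ^ r := Summable.tsum_le_of_sum_le hsum key
  have hTT : (∑' j : ℕ, ∑' k : ℕ, a j k ^ r) = ∑' jk : ℕ × ℕ, a jk.1 jk.2 ^ r :=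
    (Summable.tsum_prod' hsum fun j => hsum.prod_factor j).symm
  rw [hTT]
  calc (∑' jk : ℕ × ℕ, a jk.1 jk.2 ^ r) ^ (1 / r)
      ≤ (‖A‖ ^ r) ^ (1 / r) :=
        Real.rpow_le_rpow (tsum_nonneg fun jk => haR jk.1 jk.2) hT h1r.le
    _ = ‖A‖ := by
        rw [← Real.rpow_mul (norm_nonneg A), mul_one_div, div_self hr0.ne', Real.rpow_one]
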